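/- arXiv:1308.1147 — 2 statements merged into one kernel-verified Lean document; each statement's English description precedes it below -/
import Mathlib

section
/- Entropy bound for the sequence class: fix p > 0, let F = {f ∈ ℓ : f_j = (1+g_j)/2 for some g ∈ B_p} and X = {e_1, e_2, …}. Then for every ε > 0 and every n, H₂(F,ε) ≤ (A/ε)^p, where A is a constant depending only on p. -/
open MeasureTheory Real

namespace RST

variable {X : Type*} [MeasurableSpace X]

/-- A sample of size `n` of pairs in `X × ℝ` (with the response values in `[0,1]`). -/
abbrev Sample (X : Type*) (n : ℕ) := Fin n → X × ℝ

/-- The risk `L(f) = E (f(X) - Y)²`. -/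
noncomputable def risk (P : Measure (X × ℝ)) (f : X → ℝ) : ℝ :=
  ∫ z, (f z.1 - z.2) ^ 2 ∂P

/-- The squared `L₂(μ_X)` norm `‖g‖²`, where `μ_X` is the marginal of the first coordinate. -/
noncomputable def normSq (P : Measure (X × ℝ)) (g : X → ℝ) : ℝ :=
  ∫ x, g x ^ 2 ∂(P.map Prod.fst)

/-- The empirical `ℓ₂` pseudo-distance `d_S(f,g)`. -/
noncomputable def empDist {n : ℕ} (S : Sample X n) (f g : X → ℝ) : ℝ :=
  Real.sqrt ((n : ℝ)⁻¹ * ∑ i, (f (S i).1 - g (S i).1) ^ 2)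

/-- A (proper) `ε`-net of `F` with respect to `d_S`. -/
def IsNet {n N : ℕ} (F : Set (X → ℝ)) (ε : ℝ) (S : Sample X n) (c : Fin N → X → ℝ) : Prop :=
  (∀ i, c i ∈ F) ∧ ∀ f ∈ F, ∃ i, empDist S f (c i) ≤ ε

/-- The covering number `N₂(F, ε, S)`. -/
noncomputable def coveringNumber {n : ℕ} (F : Set (X → ℝ)) (ε : ℝ) (S : Sample X n) : ℕ :=
  sInf {N : ℕ | ∃ c : Fin N → X → ℝ, IsNet F ε S c}

/-- The empirical mean of `g` on the sample `S`. -/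
noncomputable def empMean {n : ℕ} (g : X × ℝ → ℝ) (S : Sample X n) : ℝ :=
  (n : ℝ)⁻¹ * ∑ i, g (S i)

/-- The empirical Rademacher average `R̂_n(G, S)`. -/
noncomputable def empRad {n : ℕ} (G : Set (X × ℝ → ℝ)) (S : Sample X n) : ℝ :=
  ((2 : ℝ) ^ n)⁻¹ * ∑ σ : Fin n → Bool,
    sSup ((fun g => (n : ℝ)⁻¹ * ∑ i, (if σ i then (1 : ℝ) else -1) * g (S i)) '' G)

/-- `φ` is an upper function for the class `G` at sample size `n`. -/
def IsUpperFunction (n : ℕ) (G : Set (X × ℝ → ℝ)) (φ : ℝ → ℝ) : Prop :=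
  ∀ r : ℝ, 0 < r → ∀ S : Sample X n, empRad {g ∈ G | empMean g S ≤ r} S ≤ φ r

/-- `φ` is sub-root: nonnegative, nondecreasing, and `φ(r)/√r` nonincreasing on `(0,∞)`. -/
def IsSubRoot (φ : ℝ → ℝ) : Prop :=
  (∀ r, 0 ≤ φ r) ∧ Monotone φ ∧
    ∀ r₁ r₂ : ℝ, 0 < r₁ → r₁ ≤ r₂ → φ r₂ / Real.sqrt r₂ ≤ φ r₁ / Real.sqrt r₁

/-- `r` is a localization radius of `G`: some sub-root upper function `φ_n` satisfies
`φ_n(s) ≤ s` for all `s ≥ r`. -/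
def IsLocRadius (n : ℕ) (G : Set (X × ℝ → ℝ)) (r : ℝ) : Prop :=
  0 ≤ r ∧ ∃ φ : ℝ → ℝ, IsUpperFunction n G φ ∧ IsSubRoot φ ∧ ∀ s, r ≤ s → φ s ≤ s

/-- The class `G = {(f-g)² : f, g ∈ F}`, as functions on `Z = X × ℝ`. -/
def diffSqClass (F : Set (X → ℝ)) : Set (X × ℝ → ℝ) :=
  {h | ∃ f ∈ F, ∃ g ∈ F, h = fun z => (f z.1 - g z.1) ^ 2}

/-- The squared loss `ℓ∘f : (x,y) ↦ (f(x)-y)²`. -/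
def loss (f : X → ℝ) : X × ℝ → ℝ := fun z => (f z.1 - z.2) ^ 2

/-- The squared loss class `ℓ∘F`. -/
def lossClass (F : Set (X → ℝ)) : Set (X × ℝ → ℝ) := loss '' F

/-- The distribution of an i.i.d. `n`-sample from `P`. -/
noncomputable def sampleMeasure (P : Measure (X × ℝ)) [IsProbabilityMeasure P] (n : ℕ) :
    Measure (Sample X n) := Measure.pi fun _ => P

/-- The distribution of three independent i.i.d. `n`-samples from `P`. -/
noncomputable def tripleMeasure (P : Measure (X × ℝ)) [IsProbabilityMeasure P] (n : ℕ) :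
    Measure (Sample X n × Sample X n × Sample X n) :=
  (sampleMeasure P n).prod ((sampleMeasure P n).prod (sampleMeasure P n))

/-- The response `Y` lies in `[0,1]` almost surely. -/
def yBounded (P : Measure (X × ℝ)) : Prop := ∀ᵐ z ∂P, z.2 ∈ Set.Icc (0 : ℝ) 1

/-- The aggregation-of-leaders procedure with covering radius `ε`:
a proper empirical `ε`-net `center S ·` built from `S`, the induced partition of `F`
via `assign S`, per-cell least squares estimators `erm S S' ·` computed on `S'`, and a final
sharp MS-aggregation (on `S''`) of the per-cell least squares estimators. -/
structure AggOfLeaders (F : Set (X → ℝ)) (n : ℕ) (ε : ℝ) where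
  center : Sample X n → ℕ → (X → ℝ)
  assign : Sample X n → (X → ℝ) → ℕ
  erm : Sample X n → Sample X n → ℕ → (X → ℝ)
  estimator : Sample X n → Sample X n → Sample X n → X → ℝ
  two_le_N : ∀ S : Sample X n, 2 ≤ coveringNumber F ε S
  center_mem : ∀ S : Sample X n, ∀ i < coveringNumber F ε S, center S i ∈ F
  center_net : ∀ S : Sample X n, ∀ f ∈ F, ∃ i < coveringNumber F ε S, empDist S f (center S i) ≤ ε
  assign_lt : ∀ S : Sample X n, ∀ f ∈ F, assign S f < coveringNumber F ε S
  assign_isMin : ∀ S : Sample X n, ∀ f ∈ F, ∀ j < coveringNumber F ε S,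
    empDist S f (center S (assign S f)) ≤ empDist S f (center S j)
  erm_mem : ∀ S S' : Sample X n, ∀ i < coveringNumber F ε S,
    (∃ f ∈ F, assign S f = i) → erm S S' i ∈ F ∧ assign S (erm S S' i) = i
  erm_min : ∀ S S' : Sample X n, ∀ i < coveringNumber F ε S, ∀ f ∈ F, assign S f = i →
    empMean (loss (erm S S' i)) S' ≤ empMean (loss f) S'
  estimator_range : ∀ S S' S'' x, estimator S S' S'' x ∈ Set.Icc (0 : ℝ) 1
  estimator_measurable : Measurable (fun q : (Sample X n × Sample X n × Sample X n) × X =>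
    estimator q.1.1 q.1.2.1 q.1.2.2 q.2)
  sharp_MS : ∃ C₀ : ℝ, 0 < C₀ ∧
    ∀ (P : Measure (X × ℝ)) [IsProbabilityMeasure P], yBounded P →
    ∀ S S' : Sample X n, ∀ δ : ℝ, 0 < δ →
      ENNReal.ofReal (1 - δ) ≤ (sampleMeasure P n) {S'' | risk P (estimator S S' S'') ≤
        (⨅ i : {i : ℕ // i < coveringNumber F ε S ∧ ∃ f ∈ F, assign S f = i},
          risk P (erm S S' i.1)) + C₀ * Real.log ((coveringNumber F ε S : ℝ) / δ) / n}

end RST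

namespace RST

/-- The ball `B_p = {g : |g_j| ≤ j^{-1/p}}` of sequences (indexed by `j = 1, 2, …`, here
represented by `j : ℕ` standing for the `(j+1)`-st coordinate). -/
def Bp (p : ℝ) : Set (ℕ → ℝ) :=
  {g | ∀ j : ℕ, |g j| ≤ ((j : ℝ) + 1) ^ (-(1 / p))}

/-- The class `F = {f : f_j = (1+g_j)/2, g ∈ B_p}` of `[0,1]`-valued sequences, viewed as
functions on `X = {e_1, e_2, …}` (identified with `ℕ`) via `f(e_j) = f_j`. -/
def seqClass (p : ℝ) : Set (ℕ → ℝ) :=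
  {f | ∃ g ∈ Bp p, f = fun j => (1 + g j) / 2}

end RST

namespace RST

private lemma sum_log_aux (J : ℕ) :
    (J : ℝ) * Real.log J - J ≤ ∑ j ∈ Finset.range J, Real.log ((j : ℝ) + 1) := by
  induction J with
  | zero => simp
  | succ J ih =>
    rw [Finset.sum_range_succ]
    have key : (J : ℝ) * (Real.log ((J : ℝ) + 1) - Real.log J) ≤ 1 := by
      rcases Nat.eq_zero_or_pos J with h0 | h0
      · subst h0; simp
      · have hJ : (0 : ℝ) < J := by exact_mod_cast h0
        have hdiv : Real.log ((J : ℝ) + 1) - Real.log J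
            = Real.log (((J : ℝ) + 1) / J) := by
          rw [Real.log_div (by positivity) (ne_of_gt hJ)]
        rw [hdiv]
        have hlog : Real.log (((J : ℝ) + 1) / J) ≤ ((J : ℝ) + 1) / J - 1 :=
          Real.log_le_sub_one_of_pos (by positivity)
        have h2 : (J : ℝ) * (((J : ℝ) + 1) / J - 1) = 1 := by field_simp; ring
        nlinarith
    push_cast
    nlinarith [ih]

private lemma empDist_le_of_forall {n : ℕ} (S : Sample ℕ n) (f c : ℕ → ℝ)
    (ε : ℝ) (hε : 0 ≤ ε) (h : ∀ j, |f j - c j| ≤ ε) : empDist S f c ≤ ε := by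
  have hmain : (n : ℝ)⁻¹ * ∑ i, (f (S i).1 - c (S i).1) ^ 2 ≤ ε ^ 2 := by
    have hsum : ∑ i : Fin n, (f (S i).1 - c (S i).1) ^ 2 ≤ (n : ℝ) * ε ^ 2 := by
      calc ∑ i : Fin n, (f (S i).1 - c (S i).1) ^ 2
          ≤ ∑ _i : Fin n, ε ^ 2 := by
            refine Finset.sum_le_sum fun i _ => ?_
            rw [← sq_abs]
            exact pow_le_pow_left₀ (abs_nonneg _) (h _) 2
        _ = (n : ℝ) * ε ^ 2 := by simp [mul_comm]
    rcases Nat.eq_zero_or_pos n with h0 | h0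
    · subst h0; simpa using sq_nonneg ε
    · have hn : (0 : ℝ) < n := by exact_mod_cast h0
      calc (n : ℝ)⁻¹ * ∑ i, (f (S i).1 - c (S i).1) ^ 2
          ≤ (n : ℝ)⁻¹ * ((n : ℝ) * ε ^ 2) :=
            mul_le_mul_of_nonneg_left hsum (by positivity)
        _ = ε ^ 2 := by field_simp
  calc empDist S f c ≤ Real.sqrt (ε ^ 2) := Real.sqrt_le_sqrt hmain
    _ = ε := Real.sqrt_sq hε

private lemma coveringNumber_le' {n N : ℕ} (F : Set (ℕ → ℝ)) (ε : ℝ)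
    (S : Sample ℕ n) (c : Fin N → ℕ → ℝ) (h : IsNet F ε S c) :
    coveringNumber F ε S ≤ N :=
  Nat.sInf_le ⟨c, h⟩

private lemma rpow_neg_anti' {x y e : ℝ} (hx : 0 < x) (hxy : x ≤ y) (he : 0 ≤ e) :
    y ^ (-e) ≤ x ^ (-e) :=
  Real.rpow_le_rpow_of_nonpos hx hxy (neg_nonpos.mpr he)

/-- **Theorem 7, entropy bound (eq. (th:low2:1)).** For every `p > 0` there is a constant
`A` depending only on `p` such that the empirical entropy of the sequence class `F`
satisfies `H₂(F,ε) ≤ (A/ε)^p` for every `ε > 0` (and every sample size `n`). -/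
theorem entropy_bound_sequence_class (p : ℝ) (hp : 0 < p) :
    ∃ A : ℝ, 0 < A ∧
      ∀ n : ℕ, 1 ≤ n → ∀ ε : ℝ, 0 < ε → ∀ S : Sample ℕ n,
        Real.log ((coveringNumber (seqClass p) ε S : ℝ)) ≤ (A / ε) ^ p := by
  have hlog2 : (0 : ℝ) < Real.log 2 := Real.log_pos one_lt_two
  set C : ℝ := 2 * (Real.log 2 + 1 / p) * (2 : ℝ) ^ (-p) with hCdef
  have hCpos : 0 < C := by
    have h2p : (0 : ℝ) < (2 : ℝ) ^ (-p) := Real.rpow_pos_of_pos two_pos _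
    have h1p : (0 : ℝ) < 1 / p := by positivity
    positivity
  refine ⟨C ^ (1 / p), Real.rpow_pos_of_pos hCpos _, ?_⟩
  intro n hn ε hε S
  have hRHS : (C ^ (1 / p) / ε) ^ p = C * ε ^ (-p) := by
    rw [Real.div_rpow (Real.rpow_pos_of_pos hCpos _).le hε.le, one_div,
      Real.rpow_inv_rpow hCpos.le hp.ne', Real.rpow_neg hε.le, div_eq_mul_inv]
  rw [hRHS]
  have hεp : (0 : ℝ) < ε ^ (-p) := Real.rpow_pos_of_pos hε _
  have hRHSpos : 0 < C * ε ^ (-p) := by positivity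
  set a : ℕ → ℝ := fun j => ((j : ℝ) + 1) ^ (-(1 / p)) with ha_def
  have ha_pos : ∀ j : ℕ, 0 < a j := fun j => Real.rpow_pos_of_pos (by positivity) _
  have ha_le_one : ∀ j : ℕ, a j ≤ 1 := fun j =>
    Real.rpow_le_one_of_one_le_of_nonpos
      (by exact_mod_cast le_add_of_nonneg_left (Nat.cast_nonneg j))
      (neg_nonpos.mpr (by positivity))
  have hBp : ∀ g ∈ Bp p, ∀ j : ℕ, |g j| ≤ a j := fun g hg j => hg j
  rcases le_or_gt 1 (2 * ε) with hbig | hsmall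
  · -- large ε : a single center works
    have hnet : IsNet (seqClass p) ε S (fun _ : Fin 1 => fun _ : ℕ => (1 + 0) / 2) := by
      constructor
      · intro _
        exact ⟨fun _ => 0, fun j => by simp only [abs_zero]; positivity, rfl⟩
      · intro f hf
        obtain ⟨g, hg, rfl⟩ := hf
        refine ⟨0, empDist_le_of_forall S _ _ ε hε.le fun j => ?_⟩
        have h1 : |g j| ≤ 1 := (hBp g hg j).trans (ha_le_one j)
        have he : (1 + g j) / 2 - (1 + 0) / 2 = g j / 2 := by ring
        rw [he, abs_div, abs_two]
        linarith
    have hcov : coveringNumber (seqClass p) ε S ≤ 1 := coveringNumber_le' _ _ _ _ hnet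
    rcases Nat.le_one_iff_eq_zero_or_eq_one.mp hcov with h0 | h1
    · rw [h0]; simpa using hRHSpos.le
    · rw [h1]; simpa using hRHSpos.le
  · -- small ε : the grid net
    have h2ε : (0 : ℝ) < 2 * ε := by linarith
    set J : ℕ := ⌈(2 * ε) ^ (-p)⌉₊ with hJdef
    have hval_pos : (0 : ℝ) < (2 * ε) ^ (-p) := Real.rpow_pos_of_pos h2ε _
    have hJge : (2 * ε) ^ (-p) ≤ (J : ℝ) := Nat.le_ceil _
    have hJpos : 0 < J := Nat.ceil_pos.mpr hval_pos
    have hJR : (0 : ℝ) < (J : ℝ) := by exact_mod_cast hJpos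
    have hpowval : ∀ x : ℝ, (2 * ε) ^ (-p) ≤ x → x ^ (-(1 / p)) ≤ 2 * ε := by
      intro x hx
      have h1 : x ^ (-(1 / p)) ≤ ((2 * ε) ^ (-p)) ^ (-(1 / p)) :=
        rpow_neg_anti' hval_pos hx (by positivity)
      have h2 : ((2 * ε) ^ (-p)) ^ (-(1 / p)) = 2 * ε := by
        rw [← Real.rpow_mul h2ε.le]
        have hone : (-p) * (-(1 / p)) = 1 := by field_simp
        rw [hone, Real.rpow_one]
      rw [h2] at h1; exact h1
    have hJeps : (J : ℝ) ^ (-(1 / p)) ≤ 2 * ε := hpowval _ hJge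
    set K : ℕ → ℕ := fun j => ⌊a j / (2 * ε)⌋₊ + 1 with hKdef
    set N : ℕ := ∏ j ∈ Finset.range J, K j with hNdef
    have hcard : Fintype.card (∀ j : Fin J, Fin (K j.1)) = N := by
      rw [Fintype.card_pi]
      simp only [Fintype.card_fin]
      exact Fin.prod_univ_eq_prod_range K J
    set e := Fintype.equivFinOfCardEq hcard with he_def
    set t : ℕ → ℕ → ℝ := fun j k => min (a j) (-(a j) + 2 * ε + 4 * ε * k) with ht_def
    have ht_mem : ∀ j k : ℕ, |t j k| ≤ a j := by
      intro j k
      rw [abs_le]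
      refine ⟨le_min (by linarith [ha_pos j]) ?_, min_le_left _ _⟩
      have hk : (0 : ℝ) ≤ (k : ℝ) := Nat.cast_nonneg k
      nlinarith
    set gfun : (∀ j : Fin J, Fin (K j.1)) → ℕ → ℝ :=
      fun v j => if h : j < J then t j (v ⟨j, h⟩) else 0 with hgfun_def
    set c : Fin N → ℕ → ℝ := fun m j => (1 + gfun (e.symm m) j) / 2 with hc_def
    have hnet : IsNet (seqClass p) ε S c := by
      constructor
      · intro m
        refine ⟨gfun (e.symm m), fun j => ?_, rfl⟩
        show |gfun (e.symm m) j| ≤ a j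
        simp only [hgfun_def]
        by_cases h : j < J
        · rw [dif_pos h]; exact ht_mem j _
        · rw [dif_neg h]; simpa using (ha_pos j).le
      · intro f hf
        obtain ⟨g, hg, rfl⟩ := hf
        have hgj : ∀ j, -(a j) ≤ g j ∧ g j ≤ a j := fun j => abs_le.mp (hBp g hg j)
        have hvlt : ∀ j : Fin J, ⌊(g j.1 + a j.1) / (4 * ε)⌋₊ < K j.1 := by
          intro j
          have h1 : (g j.1 + a j.1) / (4 * ε) ≤ a j.1 / (2 * ε) := by
            have h2 : g j.1 + a j.1 ≤ 2 * a j.1 := by linarith [(hgj j.1).2]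
            calc (g j.1 + a j.1) / (4 * ε) ≤ 2 * a j.1 / (4 * ε) := by gcongr
              _ = a j.1 / (2 * ε) := by ring
          exact Nat.lt_succ_of_le (Nat.floor_le_floor h1)
        set v : ∀ j : Fin J, Fin (K j.1) :=
          fun j => ⟨⌊(g j.1 + a j.1) / (4 * ε)⌋₊, hvlt j⟩ with hv_def
        refine ⟨e v, empDist_le_of_forall S _ _ ε hε.le fun j => ?_⟩
        have hcj : c (e v) j = (1 + gfun v j) / 2 := by
          rw [hc_def]; simp [Equiv.symm_apply_apply]
        rw [hcj]
        show |(1 + g j) / 2 - (1 + gfun v j) / 2| ≤ ε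
        simp only [hgfun_def]
        by_cases hj : j < J
        · rw [dif_pos hj]
          have hkval : ((v ⟨j, hj⟩ : Fin (K j)) : ℕ) = ⌊(g j + a j) / (4 * ε)⌋₊ := rfl
          set k : ℕ := ⌊(g j + a j) / (4 * ε)⌋₊ with hk_def
          have hga : (0 : ℝ) ≤ g j + a j := by linarith [(hgj j).1]
          have hfl1 : (k : ℝ) ≤ (g j + a j) / (4 * ε) := Nat.floor_le (by positivity)
          have hfl2 : (g j + a j) / (4 * ε) < (k : ℝ) + 1 := Nat.lt_floor_add_one _
          have hA : 4 * ε * (k : ℝ) ≤ g j + a j := by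
            rw [le_div_iff₀ (by positivity)] at hfl1; linarith
          have hB : g j + a j < 4 * ε * ((k : ℝ) + 1) := by
            rw [div_lt_iff₀ (by positivity)] at hfl2; linarith
          have ht2 : |g j - t j k| ≤ 2 * ε := by
            simp only [ht_def]
            rcases le_total (-(a j) + 2 * ε + 4 * ε * (k : ℝ)) (a j) with hcase | hcase
            · rw [min_eq_right hcase, abs_le]
              constructor <;> linarith
            · rw [min_eq_left hcase, abs_le]
              refine ⟨by linarith, by linarith [(hgj j).2]⟩
          rw [show (1 + g j) / 2 - (1 + t j k) / 2 = (g j - t j k) / 2 by ring,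
            abs_div, abs_two]
          linarith
        · rw [dif_neg hj]
          have hjJ : (J : ℝ) ≤ (j : ℝ) + 1 := by
            have : J ≤ j := Nat.le_of_not_lt hj
            have h1 : (J : ℝ) ≤ (j : ℝ) := by exact_mod_cast this
            linarith
          have haj : a j ≤ 2 * ε := hpowval _ (hJge.trans hjJ)
          have := hBp g hg j
          rw [show (1 + g j) / 2 - (1 + 0) / 2 = g j / 2 by ring, abs_div, abs_two]
          linarith
    -- counting
    have hcov : coveringNumber (seqClass p) ε S ≤ N := coveringNumber_le' _ _ _ _ hnet
    have hKpos : ∀ j : ℕ, 0 < K j := fun j => Nat.succ_pos _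
    have hNpos : 0 < N := Finset.prod_pos fun j _ => hKpos j
    have hlogmono : Real.log (coveringNumber (seqClass p) ε S : ℝ) ≤ Real.log (N : ℝ) := by
      rcases Nat.eq_zero_or_pos (coveringNumber (seqClass p) ε S) with h0 | h0
      · rw [h0]
        simpa using Real.log_nonneg (by exact_mod_cast hNpos)
      · exact Real.log_le_log (by exact_mod_cast h0) (by exact_mod_cast hcov)
    have hlogN : Real.log (N : ℝ) = ∑ j ∈ Finset.range J, Real.log (K j : ℝ) := by
      rw [hNdef, Nat.cast_prod]
      exact Real.log_prod fun j _ => by exact_mod_cast (hKpos j).ne'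
    have hterm : ∀ j ∈ Finset.range J,
        Real.log (K j : ℝ) ≤ Real.log 2 + (1 / p) * Real.log ((J : ℝ) / ((j : ℝ) + 1)) := by
      intro j hjmem
      have hjJ : j < J := Finset.mem_range.mp hjmem
      have hj1 : (j : ℝ) + 1 ≤ (J : ℝ) := by exact_mod_cast Nat.succ_le_of_lt hjJ
      have hjpos : (0 : ℝ) < (j : ℝ) + 1 := by positivity
      have hratio : 1 ≤ (J : ℝ) / ((j : ℝ) + 1) := (le_div_iff₀ hjpos).mpr (by linarith)
      set r : ℝ := ((J : ℝ) / ((j : ℝ) + 1)) ^ (1 / p) with hr_def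
      have hr1 : 1 ≤ r := by
        have h := Real.rpow_le_rpow zero_le_one hratio (by positivity : (0:ℝ) ≤ 1 / p)
        rwa [Real.one_rpow] at h
      have hK2r : (K j : ℝ) ≤ 2 * r := by
        have hfl : (⌊a j / (2 * ε)⌋₊ : ℝ) ≤ a j / (2 * ε) :=
          Nat.floor_le (by positivity)
        have hstep : a j / (2 * ε) ≤ r := by
          have hJp : (0 : ℝ) < (J : ℝ) ^ (-(1 / p)) := Real.rpow_pos_of_pos hJR _
          have h1 : a j / (2 * ε) ≤ a j / ((J : ℝ) ^ (-(1 / p))) := by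
            gcongr
          have h2 : a j / ((J : ℝ) ^ (-(1 / p))) = r := by
            have hjp : (0 : ℝ) < ((j : ℝ) + 1) ^ (1 / p) := Real.rpow_pos_of_pos hjpos _
            have hJp' : (0 : ℝ) < (J : ℝ) ^ (1 / p) := Real.rpow_pos_of_pos hJR _
            simp only [ha_def, hr_def]
            rw [Real.div_rpow hJR.le hjpos.le, Real.rpow_neg hjpos.le,
              Real.rpow_neg hJR.le]
            field_simp
          rw [h2] at h1; exact h1
        have hKcast : (K j : ℝ) = (⌊a j / (2 * ε)⌋₊ : ℝ) + 1 := by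
          simp only [hKdef]; push_cast; ring
        rw [hKcast]; linarith
      have hKpos' : (0 : ℝ) < (K j : ℝ) := by exact_mod_cast hKpos j
      calc Real.log (K j : ℝ) ≤ Real.log (2 * r) := Real.log_le_log hKpos' hK2r
        _ = Real.log 2 + Real.log r := Real.log_mul two_ne_zero (by positivity)
        _ = Real.log 2 + (1 / p) * Real.log ((J : ℝ) / ((j : ℝ) + 1)) := by
            rw [hr_def, Real.log_rpow (by positivity)]
    have hsumlog : ∑ j ∈ Finset.range J, Real.log ((J : ℝ) / ((j : ℝ) + 1)) ≤ (J : ℝ) := by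
      have heq : ∑ j ∈ Finset.range J, Real.log ((J : ℝ) / ((j : ℝ) + 1))
          = (J : ℝ) * Real.log J - ∑ j ∈ Finset.range J, Real.log ((j : ℝ) + 1) := by
        rw [eq_sub_iff_add_eq, ← Finset.sum_add_distrib]
        have : ∀ j ∈ Finset.range J,
            Real.log ((J : ℝ) / ((j : ℝ) + 1)) + Real.log ((j : ℝ) + 1) = Real.log J := by
          intro j _
          rw [Real.log_div hJR.ne' (by positivity)]
          ring
        rw [Finset.sum_congr rfl this, Finset.sum_const, Finset.card_range]
        simp [mul_comm]
      rw [heq]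
      linarith [sum_log_aux J]
    have hmain : Real.log (N : ℝ) ≤ (J : ℝ) * (Real.log 2 + 1 / p) := by
      rw [hlogN]
      calc ∑ j ∈ Finset.range J, Real.log (K j : ℝ)
          ≤ ∑ j ∈ Finset.range J,
              (Real.log 2 + (1 / p) * Real.log ((J : ℝ) / ((j : ℝ) + 1))) :=
            Finset.sum_le_sum hterm
        _ = (J : ℝ) * Real.log 2
              + (1 / p) * ∑ j ∈ Finset.range J, Real.log ((J : ℝ) / ((j : ℝ) + 1)) := by
            rw [Finset.sum_add_distrib, Finset.sum_const, Finset.card_range,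
              ← Finset.mul_sum]
            simp [mul_comm]
        _ ≤ (J : ℝ) * Real.log 2 + (1 / p) * (J : ℝ) := by
            have h1p : (0 : ℝ) ≤ 1 / p := by positivity
            have := mul_le_mul_of_nonneg_left hsumlog h1p
            linarith
        _ = (J : ℝ) * (Real.log 2 + 1 / p) := by ring
    have hJbound : (J : ℝ) ≤ 2 * (2 * ε) ^ (-p) := by
      have hceil : (J : ℝ) < (2 * ε) ^ (-p) + 1 := Nat.ceil_lt_add_one hval_pos.le
      have hone : 1 ≤ (2 * ε) ^ (-p) :=
        Real.one_le_rpow_of_pos_of_le_one_of_nonpos h2ε hsmall.le (by linarith)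
      linarith
    have hfinal : (J : ℝ) * (Real.log 2 + 1 / p) ≤ C * ε ^ (-p) := by
      have hpos : (0 : ℝ) ≤ Real.log 2 + 1 / p := by positivity
      have h1 : (J : ℝ) * (Real.log 2 + 1 / p)
          ≤ 2 * (2 * ε) ^ (-p) * (Real.log 2 + 1 / p) := by
        have := mul_le_mul_of_nonneg_right hJbound hpos
        linarith
      have h2 : (2 * ε) ^ (-p) = (2 : ℝ) ^ (-p) * ε ^ (-p) :=
        Real.mul_rpow two_pos.le hε.le
      rw [h2] at h1
      calc (J : ℝ) * (Real.log 2 + 1 / p)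
          ≤ 2 * ((2 : ℝ) ^ (-p) * ε ^ (-p)) * (Real.log 2 + 1 / p) := h1
        _ = C * ε ^ (-p) := by rw [hCdef]; ring
    linarith [hlogmono, hmain]

end RST
end

section
/- Minimax regret lower bound for the sequence class: fix p ≥ 2 and let F = {f ∈ ℓ : f_j = (1+g_j)/2 for some g ∈ B_p}, X = {e_1, e_2, …}, Y = [0,1]. There exists an absolute positive constant c such that for every n ≥ 1 the minimax regret satisfies V_n(F) ≥ c n^{−1/(p−1)}; that is, for every estimator f̂ there exists a probability distribution P_{XY} on X × [0,1] such that E‖f̂ − η‖² − inf_{f∈F} ‖f − η‖² ≥ c n^{−1/(p−1)}, where η(x) = E[Y|X=x]. In particular, since W_n(F) ≤ C_p n^{−2/(2+p)} and n^{−1/(p−1)} decays slower than n^{−2/(2+p)} for p > 2, the minimax regret rate is strictly slower than the minimax risk rate for p > 2. -/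
open MeasureTheory Real

namespace RST

section Aux

noncomputable def yfun (m : ℕ) (σ : Fin m → Bool) : ℕ → ℝ :=
  fun j => if h : j < m then (if σ ⟨j, h⟩ then 1 else 0) else 0

lemma yfun_cases (m : ℕ) (σ : Fin m → Bool) (j : ℕ) :
    yfun m σ j = 0 ∨ yfun m σ j = 1 := by
  unfold yfun; split_ifs <;> simp

noncomputable def Tmap (m : ℕ) (σ : Fin m → Bool) : ℕ → ℕ × ℝ :=
  fun j => (j, yfun m σ j)

lemma Tmap_meas (m : ℕ) (σ : Fin m → Bool) : Measurable (Tmap m σ) :=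
  measurable_of_countable _

noncomputable def mu0 (m : ℕ) : Measure ℕ :=
  ((m : ENNReal)⁻¹) • ∑ j ∈ Finset.range m, Measure.dirac j

lemma integral_mu0 (m : ℕ) (f : ℕ → ℝ) :
    ∫ j, f j ∂(mu0 m) = (m : ℝ)⁻¹ * ∑ j ∈ Finset.range m, f j := by
  have hint : ∀ j ∈ Finset.range m, Integrable f (Measure.dirac j) := by
    intro j _
    refine (integrable_const (f j)).congr ?_
    rw [Filter.EventuallyEq, MeasureTheory.ae_dirac_eq]
    exact Filter.eventually_pure.mpr rfl
  rw [mu0, integral_smul_measure, integral_finset_sum_measure hint]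
  simp [integral_dirac, ENNReal.toReal_inv, smul_eq_mul]

lemma isProb_mu0 (m : ℕ) (hm : m ≠ 0) : IsProbabilityMeasure (mu0 m) := by
  constructor
  rw [mu0]
  simp only [Measure.smul_apply, Measure.coe_finset_sum, Finset.sum_apply,
    Measure.dirac_apply_of_mem (Set.mem_univ _), Finset.sum_const, Finset.card_range,
    nsmul_eq_mul, mul_one, smul_eq_mul]
  exact ENNReal.inv_mul_cancel (by simpa using hm) (by simp)



noncomputable def Pm (m : ℕ) (σ : Fin m → Bool) : Measure (ℕ × ℝ) :=
  (mu0 m).map (Tmap m σ)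

lemma isProb_Pm (m : ℕ) (hm : m ≠ 0) (σ : Fin m → Bool) : IsProbabilityMeasure (Pm m σ) := by
  haveI := isProb_mu0 m hm
  exact Measure.isProbabilityMeasure_map (Tmap_meas m σ).aemeasurable

lemma integral_Pm (m : ℕ) (σ : Fin m → Bool) {g : ℕ × ℝ → ℝ} (hg : Measurable g) :
    ∫ z, g z ∂(Pm m σ) = (m : ℝ)⁻¹ * ∑ j ∈ Finset.range m, g (j, yfun m σ j) := by
  rw [Pm, integral_map (Tmap_meas m σ).aemeasurable hg.aestronglyMeasurable, integral_mu0]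
  rfl

lemma risk_Pm (m : ℕ) (σ : Fin m → Bool) (f : ℕ → ℝ) :
    risk (Pm m σ) f = (m : ℝ)⁻¹ * ∑ j ∈ Finset.range m, (f j - yfun m σ j) ^ 2 := by
  have hg : Measurable fun z : ℕ × ℝ => (f z.1 - z.2) ^ 2 :=
    (((measurable_of_countable f).comp measurable_fst).sub measurable_snd).pow measurable_const
  exact integral_Pm m σ hg

lemma yBounded_Pm (m : ℕ) (σ : Fin m → Bool) : yBounded (Pm m σ) := by
  rw [yBounded, Pm]
  rw [MeasureTheory.ae_map_iff (Tmap_meas m σ).aemeasurable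
    (measurable_snd measurableSet_Icc)]
  refine Filter.Eventually.of_forall fun j => ?_
  rcases yfun_cases m σ j with h | h <;> simp [Tmap, h]

/-- The sample map induced by the x-sample. -/
noncomputable def Dmap (m : ℕ) (σ : Fin m → Bool) (n : ℕ) :
    (Fin n → ℕ) → Sample ℕ n := fun ω i => Tmap m σ (ω i)

lemma Dmap_meas (m : ℕ) (σ : Fin m → Bool) (n : ℕ) : Measurable (Dmap m σ n) :=
  measurable_pi_lambda _ fun i => (Tmap_meas m σ).comp (measurable_pi_apply i)

lemma sampleMeasure_Pm (m : ℕ) (hm : m ≠ 0) (σ : Fin m → Bool) (n : ℕ) :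
    @sampleMeasure ℕ _ (Pm m σ) (isProb_Pm m hm σ) n
      = (Measure.pi fun _ : Fin n => mu0 m).map (Dmap m σ n) := by
  haveI := isProb_mu0 m hm
  haveI := isProb_Pm m hm σ
  rw [sampleMeasure]
  refine Measure.pi_eq fun s hs => ?_
  rw [Measure.map_apply (Dmap_meas m σ n) (MeasurableSet.univ_pi hs)]
  have hpre : Dmap m σ n ⁻¹' Set.pi Set.univ s
      = Set.pi Set.univ fun i => Tmap m σ ⁻¹' (s i) := by
    ext ω; simp [Dmap, Set.mem_pi]
  rw [hpre, Measure.pi_pi]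
  refine Finset.prod_congr rfl fun i _ => ?_
  rw [Pm, Measure.map_apply (Tmap_meas m σ) (hs i)]

end Aux

lemma pairing {n m : ℕ} (fhat : Sample ℕ n → ℕ → ℝ)
    (ω : Fin n → ℕ) (j : ℕ) (hj : j < m) (hω : ∀ i, ω i ≠ j) :
    (2:ℝ)^m / 4 ≤ ∑ σ : Fin m → Bool, (fhat (Dmap m σ n ω) j - yfun m σ j)^2 := by
  classical
  set j0 : Fin m := ⟨j, hj⟩
  set e : (Fin m → Bool) → (Fin m → Bool) := fun σ => Function.update σ j0 (!σ j0) with he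
  have hinv : Function.Involutive e := by
    intro σ; funext k
    rcases eq_or_ne k j0 with rfl | hk
    · simp [he]
    · simp [he, Function.update_of_ne hk]
  set F : (Fin m → Bool) → ℝ := fun σ => (fhat (Dmap m σ n ω) j - yfun m σ j)^2 with hF
  have hD : ∀ σ, Dmap m (e σ) n ω = Dmap m σ n ω := by
    intro σ; funext i
    have hne : ω i ≠ j := hω i
    simp only [Dmap, Tmap]
    congr 1
    unfold yfun
    by_cases h : ω i < m
    · rw [dif_pos h, dif_pos h]
      have : (⟨ω i, h⟩ : Fin m) ≠ j0 := by
        simp only [ne_eq, Fin.mk.injEq, j0]; exact hne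
      rw [show e σ ⟨ω i, h⟩ = σ ⟨ω i, h⟩ from Function.update_of_ne this _ _]
    · rw [dif_neg h, dif_neg h]
  have hy : ∀ σ, yfun m (e σ) j = 1 - yfun m σ j := by
    intro σ
    unfold yfun
    rw [dif_pos hj, dif_pos hj]
    have : e σ j0 = !σ j0 := Function.update_self _ _ _
    rcases Bool.eq_false_or_eq_true (σ j0) with h | h <;> simp [j0] at this ⊢ <;>
      rw [show (⟨j, hj⟩ : Fin m) = j0 from rfl] <;> simp only [j0] at h ⊢ <;> simp [this, h]
  have hsum : ∑ σ, F σ = ∑ σ, F (e σ) :=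
    (Equiv.sum_comp (hinv.toPerm e) F).symm
  have hpt : ∀ σ, (1:ℝ)/2 ≤ F σ + F (e σ) := by
    intro σ
    have h1 : F (e σ) = (fhat (Dmap m σ n ω) j - (1 - yfun m σ j))^2 := by
      rw [hF]; simp only; rw [hD σ, hy σ]
    rcases (by unfold yfun; split_ifs <;> simp :
        yfun m σ j = 0 ∨ yfun m σ j = 1) with h | h <;>
      · show (1:ℝ)/2 ≤ F σ + F (e σ)
        rw [show F σ = (fhat (Dmap m σ n ω) j - yfun m σ j)^2 from rfl, h1, h]
        nlinarith [sq_nonneg (2*(fhat (Dmap m σ n ω) j) - 1)]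
  have hcard : (Finset.univ : Finset (Fin m → Bool)).card = 2 ^ m := by
    simp [Fintype.card_fun]
  have h2 : (2:ℝ)^m / 2 ≤ 2 * ∑ σ, F σ := by
    have : 2 * ∑ σ, F σ = ∑ σ, (F σ + F (e σ)) := by
      rw [Finset.sum_add_distrib, ← hsum]; ring
    rw [this]
    calc (2:ℝ)^m / 2 = ∑ _σ : Fin m → Bool, ((1:ℝ)/2) := by
          rw [Finset.sum_const, hcard]; push_cast; ring
      _ ≤ _ := Finset.sum_le_sum fun σ _ => hpt σ
  linarith

lemma card_unseen {n m : ℕ} (ω : Fin n → ℕ) :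
    (m : ℝ) - n ≤ (((Finset.range m).filter fun j => ∀ i, ω i ≠ j).card : ℝ) := by
  classical
  have hsplit := Finset.card_filter_add_card_filter_not
    (s := Finset.range m) (p := fun j => ∀ i, ω i ≠ j)
  have hsub : ((Finset.range m).filter fun j => ¬ ∀ i, ω i ≠ j) ⊆
      Finset.image ω Finset.univ := by
    intro j hj
    simp only [Finset.mem_filter, not_forall, not_ne_iff] at hj
    obtain ⟨-, i, hi⟩ := hj
    exact Finset.mem_image.mpr ⟨i, Finset.mem_univ i, hi⟩
  have hle : (((Finset.range m).filter fun j => ¬ ∀ i, ω i ≠ j).card) ≤ n :=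
    le_trans (Finset.card_le_card hsub)
      (le_trans Finset.card_image_le (by simp))
  have h1 : ((((Finset.range m).filter fun j => ∀ i, ω i ≠ j).card : ℝ))
      + (((Finset.range m).filter fun j => ¬ ∀ i, ω i ≠ j).card : ℝ) = m := by
    rw [← Nat.cast_add]
    norm_cast
    simpa using hsplit
  have h2 : ((((Finset.range m).filter fun j => ¬ ∀ i, ω i ≠ j).card : ℝ)) ≤ n := by
    exact_mod_cast hle
  linarith

lemma pointwise_sum {n m : ℕ} (fhat : Sample ℕ n → ℕ → ℝ) (ω : Fin n → ℕ) :
    (2:ℝ)^m * (((m:ℝ) - n)/(4*m)) ≤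
      ∑ σ : Fin m → Bool, risk (Pm m σ) (fhat (Dmap m σ n ω)) := by
  classical
  set U := (Finset.range m).filter fun j => ∀ i, ω i ≠ j with hU
  have step1 : ∀ σ : Fin m → Bool,
      (m:ℝ)⁻¹ * ∑ j ∈ U, (fhat (Dmap m σ n ω) j - yfun m σ j)^2
        ≤ risk (Pm m σ) (fhat (Dmap m σ n ω)) := by
    intro σ
    rw [risk_Pm]
    refine mul_le_mul_of_nonneg_left ?_ (inv_nonneg.2 (Nat.cast_nonneg m))
    refine Finset.sum_le_sum_of_subset_of_nonneg (Finset.filter_subset _ _) ?_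
    intro j _ _; positivity
  calc (2:ℝ)^m * (((m:ℝ) - n)/(4*m))
      = (m:ℝ)⁻¹ * (((m:ℝ) - n) * ((2:ℝ)^m/4)) := by
        rcases Nat.eq_zero_or_pos m with hm | hm
        · subst hm; simp
        · have : (0:ℝ) < m := by exact_mod_cast hm
          field_simp
    _ ≤ (m:ℝ)⁻¹ * ∑ j ∈ U, (2:ℝ)^m/4 := by
        rw [Finset.sum_const, nsmul_eq_mul]
        refine mul_le_mul_of_nonneg_left ?_ (inv_nonneg.2 (Nat.cast_nonneg m))
        exact mul_le_mul_of_nonneg_right (card_unseen ω) (by positivity)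
    _ ≤ (m:ℝ)⁻¹ * ∑ j ∈ U, ∑ σ : Fin m → Bool,
          (fhat (Dmap m σ n ω) j - yfun m σ j)^2 := by
        refine mul_le_mul_of_nonneg_left ?_ (inv_nonneg.2 (Nat.cast_nonneg m))
        refine Finset.sum_le_sum fun j hj => ?_
        rw [hU] at hj
        simp only [Finset.mem_filter, Finset.mem_range] at hj
        exact pairing fhat ω j hj.1 hj.2
    _ = ∑ σ : Fin m → Bool, (m:ℝ)⁻¹ *
          ∑ j ∈ U, (fhat (Dmap m σ n ω) j - yfun m σ j)^2 := by
        rw [Finset.sum_comm, Finset.mul_sum]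
    _ ≤ _ := Finset.sum_le_sum fun σ _ => step1 σ


lemma risk_nonneg {m : ℕ} (σ : Fin m → Bool) (f : ℕ → ℝ) : 0 ≤ risk (Pm m σ) f :=
  integral_nonneg fun z => sq_nonneg _

lemma iInf_risk_le {m : ℕ} (hm : m ≠ 0) (σ : Fin m → Bool) {p : ℝ} (hp : 2 ≤ p) :
    ⨅ f : ↥(seqClass p), risk (Pm m σ) f.1 ≤ (1 - (m:ℝ) ^ (-(1/p)))/4 := by
  classical
  set b : ℝ := (m:ℝ) ^ (-(1/p)) with hb
  set fstar : ℕ → ℝ := fun j => (1 + (2 * yfun m σ j - 1) * ((j:ℝ)+1) ^ (-(1/p)))/2 with hfstar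
  have hmem : fstar ∈ seqClass p := by
    refine ⟨fun j => (2 * yfun m σ j - 1) * ((j:ℝ)+1) ^ (-(1/p)), ?_, rfl⟩
    intro j
    have h1 : |2 * yfun m σ j - 1| = 1 := by
      rcases yfun_cases m σ j with h | h <;> rw [h] <;> norm_num
    rw [abs_mul, h1, one_mul, abs_of_nonneg (Real.rpow_nonneg (by positivity) _)]
  have hbound : risk (Pm m σ) fstar ≤ (1 - b)/4 := by
    rw [risk_Pm]
    have hterm : ∀ j ∈ Finset.range m, (fstar j - yfun m σ j)^2 ≤ (1 - b)/4 := by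
      intro j hj
      have hjm : (j:ℝ) + 1 ≤ m := by
        have := Finset.mem_range.mp hj; exact_mod_cast this
      set bj : ℝ := ((j:ℝ)+1) ^ (-(1/p)) with hbj
      have hp0 : (0:ℝ) < p := by linarith
      have hbjb : b ≤ bj :=
        Real.rpow_le_rpow_of_nonpos (by positivity) hjm
          (neg_nonpos.mpr (le_of_lt (by positivity)))
      have hbj1 : bj ≤ 1 :=
        Real.rpow_le_one_of_one_le_of_nonpos (by linarith) (by
          have hp0 : 0 < p := by linarith
          have : 0 < 1/p := by positivity
          linarith)
      have hsq : (fstar j - yfun m σ j)^2 = ((1 - bj)/2)^2 := by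
        rcases yfun_cases m σ j with h | h <;>
          · rw [hfstar]; simp only; rw [h]; ring
      have hb0 : (0:ℝ) ≤ b := Real.rpow_nonneg (Nat.cast_nonneg m) _
      have hbj0 : (0:ℝ) ≤ bj := Real.rpow_nonneg (by positivity) _
      rw [hsq]
      nlinarith [hbjb, hbj1, hb0, hbj0, mul_nonneg (sub_nonneg.2 hbj1) hbj0]
    calc (m:ℝ)⁻¹ * ∑ j ∈ Finset.range m, (fstar j - yfun m σ j)^2
        ≤ (m:ℝ)⁻¹ * ∑ j ∈ Finset.range m, ((1 - b)/4) :=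
          mul_le_mul_of_nonneg_left (Finset.sum_le_sum hterm)
            (inv_nonneg.2 (Nat.cast_nonneg m))
      _ = (1 - b)/4 := by
          rw [Finset.sum_const, Finset.card_range, nsmul_eq_mul, ← mul_assoc,
            inv_mul_cancel₀ (by exact_mod_cast hm : ((m:ℝ) ≠ 0)), one_mul]
  refine le_trans (ciInf_le ?_ (⟨fstar, hmem⟩ : ↥(seqClass p))) hbound
  exact ⟨0, by rintro y ⟨f, rfl⟩; exact risk_nonneg σ _⟩

lemma integral_risk_eq {n m : ℕ} (hm : m ≠ 0) (σ : Fin m → Bool)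
    (fhat : Sample ℕ n → ℕ → ℝ)
    (hmeas : Measurable (fun q : Sample ℕ n × ℕ => fhat q.1 q.2)) :
    ∫ D, risk (Pm m σ) (fhat D) ∂(@sampleMeasure ℕ _ (Pm m σ) (isProb_Pm m hm σ) n)
      = ∫ ω, risk (Pm m σ) (fhat (Dmap m σ n ω)) ∂(Measure.pi fun _ : Fin n => mu0 m) := by
  rw [sampleMeasure_Pm m hm σ n]
  have hrm : Measurable fun D : Sample ℕ n => risk (Pm m σ) (fhat D) := by
    have h : (fun D : Sample ℕ n => risk (Pm m σ) (fhat D))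
        = fun D => (m:ℝ)⁻¹ * ∑ j ∈ Finset.range m, (fhat D j - yfun m σ j)^2 := by
      funext D; rw [risk_Pm]
    rw [h]
    refine Measurable.const_mul ?_ _
    refine Finset.measurable_sum _ fun j _ => ?_
    exact ((hmeas.comp (measurable_id.prodMk measurable_const)).sub
      measurable_const).pow measurable_const
  rw [integral_map (Dmap_meas m σ n).aemeasurable hrm.aestronglyMeasurable]

lemma sum_integral_risk_ge {n m : ℕ} (hm : m ≠ 0)
    (fhat : Sample ℕ n → ℕ → ℝ) (hrange : ∀ D x, fhat D x ∈ Set.Icc (0:ℝ) 1)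
    (hmeas : Measurable fun q : Sample ℕ n × ℕ => fhat q.1 q.2) :
    (2:ℝ)^m * (((m:ℝ) - n)/(4*m)) ≤
      ∑ σ : Fin m → Bool,
        ∫ D, risk (Pm m σ) (fhat D) ∂(@sampleMeasure ℕ _ (Pm m σ) (isProb_Pm m hm σ) n) := by
  classical
  haveI := isProb_mu0 m hm
  set μ : Measure (Fin n → ℕ) := Measure.pi fun _ : Fin n => mu0 m with hμ
  haveI : IsProbabilityMeasure μ := by rw [hμ]; infer_instance
  set R : (Fin m → Bool) → (Fin n → ℕ) → ℝ :=
    fun σ ω => risk (Pm m σ) (fhat (Dmap m σ n ω)) with hR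
  have hRmeas : ∀ σ, Measurable (R σ) := by
    intro σ
    have h : R σ = fun ω => (m:ℝ)⁻¹ *
        ∑ j ∈ Finset.range m, (fhat (Dmap m σ n ω) j - yfun m σ j)^2 := by
      funext ω; rw [hR]; simp only; rw [risk_Pm]
    rw [h]
    refine Measurable.const_mul ?_ _
    refine Finset.measurable_sum _ fun j _ => ?_
    exact ((hmeas.comp ((Dmap_meas m σ n).prodMk measurable_const)).sub
      measurable_const).pow measurable_const
  have hRbound : ∀ σ ω, |R σ ω| ≤ 1 := by
    intro σ ω
    have h0 : 0 ≤ R σ ω := risk_nonneg σ _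
    rw [abs_of_nonneg h0, hR]
    simp only
    rw [risk_Pm]
    have hterm : ∀ j ∈ Finset.range m, (fhat (Dmap m σ n ω) j - yfun m σ j)^2 ≤ 1 := by
      intro j _
      have h1 := hrange (Dmap m σ n ω) j
      rcases yfun_cases m σ j with h | h <;>
        · rw [h]; obtain ⟨ha, hb⟩ := h1; nlinarith
    calc (m:ℝ)⁻¹ * ∑ j ∈ Finset.range m, (fhat (Dmap m σ n ω) j - yfun m σ j)^2
        ≤ (m:ℝ)⁻¹ * ∑ j ∈ Finset.range m, (1:ℝ) :=
          mul_le_mul_of_nonneg_left (Finset.sum_le_sum hterm)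
            (inv_nonneg.2 (Nat.cast_nonneg m))
      _ = 1 := by
          rw [Finset.sum_const, Finset.card_range, nsmul_eq_mul, mul_one]
          exact inv_mul_cancel₀ (by exact_mod_cast hm)
  have hRint : ∀ σ, Integrable (R σ) μ := by
    intro σ
    refine (integrable_const (1:ℝ)).mono' (hRmeas σ).aestronglyMeasurable ?_
    exact Filter.Eventually.of_forall fun ω => by
      simpa using hRbound σ ω
  have hsum : ∀ σ : Fin m → Bool,
      ∫ D, risk (Pm m σ) (fhat D) ∂(@sampleMeasure ℕ _ (Pm m σ) (isProb_Pm m hm σ) n)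
        = ∫ ω, R σ ω ∂μ := fun σ => integral_risk_eq hm σ fhat hmeas
  rw [Finset.sum_congr rfl fun σ _ => hsum σ, ← integral_finset_sum _ fun σ _ => hRint σ]
  have hpt : ∀ ω, (2:ℝ)^m * (((m:ℝ) - n)/(4*m)) ≤ ∑ σ : Fin m → Bool, R σ ω :=
    fun ω => pointwise_sum fhat ω
  calc (2:ℝ)^m * (((m:ℝ) - n)/(4*m))
      = ∫ _ω, (2:ℝ)^m * (((m:ℝ) - n)/(4*m)) ∂μ := by
        rw [integral_const]; simp
    _ ≤ ∫ ω, ∑ σ : Fin m → Bool, R σ ω ∂μ :=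
        integral_mono (integrable_const _) (integrable_finset_sum _ fun σ _ => hRint σ)
          hpt


lemma half_le_two_rpow_neg {t : ℝ} (ht0 : 0 ≤ t) (ht1 : t ≤ 1) : (1/2:ℝ) ≤ (2:ℝ) ^ (-t) := by
  have h2 : (2:ℝ)^t ≤ 2 := by
    calc (2:ℝ)^t ≤ (2:ℝ)^(1:ℝ) := Real.rpow_le_rpow_of_exponent_le one_le_two ht1
      _ = 2 := Real.rpow_one 2
  have hpos : (0:ℝ) < (2:ℝ)^t := Real.rpow_pos_of_pos two_pos t
  rw [Real.rpow_neg (by norm_num), show (1/2:ℝ) = 2⁻¹ by norm_num]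
  exact inv_anti₀ hpos h2

lemma numeric_bound {p : ℝ} (hp : 2 ≤ p) {n : ℕ} (hn : 1 ≤ n) :
    ∃ m : ℕ, m ≠ 0 ∧
      ((1:ℝ)/32) * (n:ℝ) ^ (-(1/(p-1))) ≤
        ((m:ℝ) - n)/(4*m) - (1 - (m:ℝ) ^ (-(1/p)))/4 := by
  have hp0 : (0:ℝ) < p := by linarith
  have hpm1 : (0:ℝ) < p - 1 := by linarith
  set q : ℝ := p/(p-1) with hq
  have hq1 : 1 ≤ q := by rw [hq, le_div_iff₀ hpm1]; linarith
  have hn1 : (1:ℝ) ≤ (n:ℝ) := by exact_mod_cast hn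
  have hn2 : (1:ℝ) ≤ 2*(n:ℝ) := by linarith
  set x : ℝ := (2*(n:ℝ)) ^ q with hxdef
  have hx2n : 2*(n:ℝ) ≤ x := by
    calc 2*(n:ℝ) = (2*(n:ℝ)) ^ (1:ℝ) := (Real.rpow_one _).symm
      _ ≤ x := Real.rpow_le_rpow_of_exponent_le hn2 hq1
  have hx1 : (1:ℝ) ≤ x := le_trans hn2 hx2n
  refine ⟨⌈x⌉₊, ?_, ?_⟩
  · have : 0 < ⌈x⌉₊ := Nat.ceil_pos.mpr (by linarith)
    omega
  set m : ℕ := ⌈x⌉₊ with hmdef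
  have hxm : x ≤ (m:ℝ) := Nat.le_ceil x
  have hm2x : (m:ℝ) ≤ 2*x := by
    have := Nat.ceil_lt_add_one (show (0:ℝ) ≤ x by linarith)
    calc (m:ℝ) ≤ x + 1 := this.le
      _ ≤ 2*x := by linarith
  have hmpos : (0:ℝ) < m := by linarith
  set b : ℝ := (m:ℝ) ^ (-(1/p)) with hb
  have hb0 : 0 < b := Real.rpow_pos_of_pos hmpos _
  -- key1 : n/m ≤ b/2
  have e1 : x ^ ((p-1)/p) = 2*(n:ℝ) := by
    rw [hxdef]
    rw [← Real.rpow_mul (by linarith : (0:ℝ) ≤ 2*(n:ℝ))]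
    rw [show q * ((p-1)/p) = 1 by rw [hq]; field_simp]
    exact Real.rpow_one _
  have e2 : 2*(n:ℝ) ≤ (m:ℝ)^((p-1)/p) := by
    rw [← e1]
    exact Real.rpow_le_rpow (by linarith) hxm (by positivity)
  have e3 : (m:ℝ)^((p-1)/p) = (m:ℝ) * b := by
    rw [hb, show (p-1)/p = 1 + (-(1/p)) by field_simp; ring,
      Real.rpow_add hmpos, Real.rpow_one]
  have key1 : (n:ℝ)/(m:ℝ) ≤ b/2 := by
    rw [div_le_div_iff₀ hmpos two_pos]
    nlinarith [e2, e3]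
  -- key2 : (1/4) * n^{-(1/(p-1))} ≤ b
  have hnr0 : (0:ℝ) ≤ (n:ℝ) ^ (-(1/(p-1))) := Real.rpow_nonneg (by positivity) _
  have key2 : (1/4:ℝ) * (n:ℝ) ^ (-(1/(p-1))) ≤ b := by
    have h1 : (2*x) ^ (-(1/p)) ≤ b :=
      Real.rpow_le_rpow_of_nonpos hmpos hm2x
        (neg_nonpos.mpr (le_of_lt (by positivity)))
    have h2 : (2*x) ^ (-(1/p))
        = (2:ℝ)^(-(1/p)) * ((2:ℝ)^(-(1/(p-1))) * (n:ℝ)^(-(1/(p-1)))) := by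
      rw [Real.mul_rpow (by norm_num) (by linarith : (0:ℝ) ≤ x)]
      congr 1
      rw [hxdef, ← Real.rpow_mul (by linarith : (0:ℝ) ≤ 2*(n:ℝ)),
        show q * (-(1/p)) = -(1/(p-1)) by rw [hq]; field_simp,
        Real.mul_rpow (by norm_num) (by positivity)]
    have h3 : (1/2:ℝ) ≤ (2:ℝ)^(-(1/p)) :=
      half_le_two_rpow_neg (by positivity) (by rw [div_le_one hp0]; linarith)
    have h4 : (1/2:ℝ) ≤ (2:ℝ)^(-(1/(p-1))) :=
      half_le_two_rpow_neg (by positivity) (by rw [div_le_one hpm1]; linarith)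
    calc (1/4:ℝ) * (n:ℝ) ^ (-(1/(p-1)))
        = (1/2:ℝ) * ((1/2:ℝ) * (n:ℝ)^(-(1/(p-1)))) := by ring
      _ ≤ (2:ℝ)^(-(1/p)) * ((2:ℝ)^(-(1/(p-1))) * (n:ℝ)^(-(1/(p-1)))) := by
          have hA : (1/2:ℝ) * (n:ℝ)^(-(1/(p-1))) ≤ (2:ℝ)^(-(1/(p-1))) * (n:ℝ)^(-(1/(p-1))) :=
            mul_le_mul_of_nonneg_right h4 hnr0
          have hB : (0:ℝ) ≤ (1/2:ℝ) * (n:ℝ)^(-(1/(p-1))) := by positivity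
          calc (1/2:ℝ) * ((1/2:ℝ) * (n:ℝ)^(-(1/(p-1))))
              ≤ (2:ℝ)^(-(1/p)) * ((1/2:ℝ) * (n:ℝ)^(-(1/(p-1)))) :=
                mul_le_mul_of_nonneg_right h3 hB
            _ ≤ _ := mul_le_mul_of_nonneg_left hA (le_of_lt (by positivity))
      _ = (2*x) ^ (-(1/p)) := h2.symm
      _ ≤ b := h1
  -- conclude
  have efinal : ((m:ℝ) - n)/(4*m) - (1 - b)/4 = (b - (n:ℝ)/m)/4 := by
    field_simp
    ring
  rw [efinal]
  calc ((1:ℝ)/32) * (n:ℝ) ^ (-(1/(p-1))) = ((1/4:ℝ) * (n:ℝ) ^ (-(1/(p-1))))/8 := by ring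
    _ ≤ b/8 := by linarith
    _ ≤ (b - (n:ℝ)/m)/4 := by
        have : (n:ℝ)/(m:ℝ) ≤ b/2 := key1
        linarith

/-- **Theorem 7, minimax regret lower bound (eq. (th:low2:3)).** There is an absolute
constant `c > 0` such that for every `p ≥ 2` and every `n ≥ 1`, for every estimator `f̂`
(based on an i.i.d. `n`-sample, with values in `[0,1]`) there is a distribution `P` on
`X × [0,1]` with `E L(f̂) - inf_{f ∈ F} L(f) = E‖f̂-η‖² - inf_{f∈F} ‖f-η‖² ≥ c n^{-1/(p-1)}`;
hence `V_n(F) ≥ c n^{-1/(p-1)}`, a rate slower than the minimax risk rate `n^{-2/(2+p)}`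
for `p > 2`. -/
theorem minimax_regret_lower_bound_sequence_class :
    ∃ c : ℝ, 0 < c ∧
      ∀ p : ℝ, 2 ≤ p → ∀ n : ℕ, 1 ≤ n →
        ∀ fhat : Sample ℕ n → ℕ → ℝ,
          (∀ D x, fhat D x ∈ Set.Icc (0 : ℝ) 1) →
          Measurable (fun q : Sample ℕ n × ℕ => fhat q.1 q.2) →
          ∃ (P : Measure (ℕ × ℝ)) (hP : IsProbabilityMeasure P), yBounded P ∧
            c * (n : ℝ) ^ (-(1 / (p - 1))) ≤
              (∫ D, risk P (fhat D) ∂(@sampleMeasure ℕ _ P hP n)) -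
                ⨅ f : ↥(seqClass p), risk P f.1 := by
  refine ⟨1/32, by norm_num, ?_⟩
  intro p hp n hn fhat hrange hmeas
  classical
  obtain ⟨m, hm0, havg⟩ := numeric_bound hp hn
  set t : ℝ := (1/32:ℝ) * (n:ℝ) ^ (-(1/(p-1))) with ht
  set regret : (Fin m → Bool) → ℝ := fun σ =>
    (∫ D, risk (Pm m σ) (fhat D) ∂(@sampleMeasure ℕ _ (Pm m σ) (isProb_Pm m hm0 σ) n))
      - ⨅ f : ↥(seqClass p), risk (Pm m σ) f.1 with hreg
  have hcard : ((Finset.univ : Finset (Fin m → Bool)).card : ℝ) = (2:ℝ)^m := by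
    rw [Finset.card_univ]
    simp [Fintype.card_fun]
  have hsum : (2:ℝ)^m * t ≤ ∑ σ : Fin m → Bool, regret σ := by
    have h1 := sum_integral_risk_ge hm0 fhat hrange hmeas
    have h2 : ∑ σ : Fin m → Bool, (⨅ f : ↥(seqClass p), risk (Pm m σ) f.1)
        ≤ (2:ℝ)^m * ((1 - (m:ℝ) ^ (-(1/p)))/4) := by
      calc ∑ σ : Fin m → Bool, (⨅ f : ↥(seqClass p), risk (Pm m σ) f.1)
          ≤ ∑ _σ : Fin m → Bool, ((1 - (m:ℝ) ^ (-(1/p)))/4) :=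
            Finset.sum_le_sum fun σ _ => iInf_risk_le hm0 σ hp
        _ = (2:ℝ)^m * ((1 - (m:ℝ) ^ (-(1/p)))/4) := by
            rw [Finset.sum_const, nsmul_eq_mul, hcard]
    have h4 : ∑ σ : Fin m → Bool, regret σ =
        (∑ σ : Fin m → Bool,
          ∫ D, risk (Pm m σ) (fhat D) ∂(@sampleMeasure ℕ _ (Pm m σ) (isProb_Pm m hm0 σ) n))
        - ∑ σ : Fin m → Bool, (⨅ f : ↥(seqClass p), risk (Pm m σ) f.1) := by
      rw [hreg, Finset.sum_sub_distrib]
    have h5 : (2:ℝ)^m * t ≤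
        (2:ℝ)^m * (((m:ℝ)-n)/(4*m) - (1 - (m:ℝ) ^ (-(1/p)))/4) := by
      refine mul_le_mul_of_nonneg_left ?_ (by positivity)
      exact havg
    rw [mul_sub] at h5
    rw [h4]
    linarith
  have hex : ∃ σ : Fin m → Bool, t ≤ regret σ := by
    by_contra hc
    push_neg at hc
    have hlt : ∑ σ : Fin m → Bool, regret σ < ∑ _σ : Fin m → Bool, t :=
      Finset.sum_lt_sum_of_nonempty Finset.univ_nonempty fun σ _ => hc σ
    rw [Finset.sum_const, nsmul_eq_mul, hcard] at hlt
    linarith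
  obtain ⟨σ, hσ⟩ := hex
  exact ⟨Pm m σ, isProb_Pm m hm0 σ, yBounded_Pm m σ, hσ⟩

end RST
end
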